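/- Let n ≥ 2 and let R be a Kähler curvature-type tensor on ℂ^n whose traceless bisectional curvature operator is nonnegative. Then for all indices i ≠ j: Re(R(i,i,i,i)) + Re(R(j,j,j,j)) ≥ 2·Re(R(i,i,j,j)) ≥ 0. -/

import Mathlib

open BigOperators

/-- A Kähler curvature-type tensor on `ℂ^n`: `R i j k l` stands for `R_{i j̄ k l̄}` in a
unitary frame, with the symmetries `R_{i j̄ k l̄} = R_{k j̄ i l̄}`, `R_{i j̄ k l̄} = R_{i l̄ k j̄}`
and the reality condition `conj R_{i j̄ k l̄} = R_{j ī l k̄}`. -/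
def IsKahlerCurvTensor {n : ℕ} (R : Fin n → Fin n → Fin n → Fin n → ℂ) : Prop :=
  (∀ i j k l, R i j k l = R k j i l) ∧
  (∀ i j k l, R i j k l = R i l k j) ∧
  (∀ i j k l, starRingEnd ℂ (R i j k l) = R j i l k)

/-- The Ricci tensor `Ric(i,j) = Σ_k R(i,j,k,k)` of a curvature-type tensor. -/
noncomputable def ricci {n : ℕ} (R : Fin n → Fin n → Fin n → Fin n → ℂ) (i j : Fin n) : ℂ :=
  ∑ k, R i j k k

/-- The scalar curvature `r = Σ_i Re(Ric(i,i))` of a curvature-type tensor. -/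
noncomputable def scalarCurv {n : ℕ} (R : Fin n → Fin n → Fin n → Fin n → ℂ) : ℝ :=
  ∑ i, (ricci R i i).re

/-- `η` belongs to `H₀`, the real vector space of trace-free Hermitian `n × n` matrices
(identified with traceless real `(1,1)`-forms). -/
def MemH0 {n : ℕ} (η : Matrix (Fin n) (Fin n) ℂ) : Prop :=
  η.IsHermitian ∧ η.trace = 0

/-- The inner product `⟨η,τ⟩ = Re Tr(ητ)` on Hermitian matrices. -/
noncomputable def h0Inner {n : ℕ} (η τ : Matrix (Fin n) (Fin n) ℂ) : ℝ :=
  (Matrix.trace (η * τ)).re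

/-- The (real-valued) symmetric bilinear form `ℛ(η,τ) = Σ R(i,j,k,l)·η(j,i)·τ(l,k)`
induced by a curvature-type tensor on Hermitian matrices. -/
noncomputable def curvForm {n : ℕ} (R : Fin n → Fin n → Fin n → Fin n → ℂ)
    (η τ : Matrix (Fin n) (Fin n) ℂ) : ℝ :=
  (∑ i, ∑ j, ∑ k, ∑ l, R i j k l * η j i * τ l k).re

/-- The traceless bisectional curvature operator of `R` is nonnegative:
`ℛ(η,η) ≥ 0` for every `η ∈ H₀`. -/
def NonnegTBC {n : ℕ} (R : Fin n → Fin n → Fin n → Fin n → ℂ) : Prop :=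
  ∀ η : Matrix (Fin n) (Fin n) ℂ, MemH0 η → 0 ≤ curvForm R η η

/-- The traceless bisectional curvature operator of `R` is 2-nonnegative:
`ℛ(η,η) + ℛ(τ,τ) ≥ 0` for all orthonormal pairs `η, τ ∈ H₀`. -/
def TwoNonnegTBC {n : ℕ} (R : Fin n → Fin n → Fin n → Fin n → ℂ) : Prop :=
  ∀ η τ : Matrix (Fin n) (Fin n) ℂ, MemH0 η → MemH0 τ →
    h0Inner η η = 1 → h0Inner τ τ = 1 → h0Inner η τ = 0 →
    0 ≤ curvForm R η η + curvForm R τ τ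

lemma sum4_stdBasis {n : ℕ} (f : Fin n → Fin n → Fin n → Fin n → ℂ) (p q r s : Fin n)
    (x y : ℂ) :
    (∑ a, ∑ b, ∑ c, ∑ d, f a b c d * (Matrix.single p q x) b a *
      (Matrix.single r s y) d c) = f q p s r * x * y := by
  simp [Matrix.single, Matrix.of_apply, mul_ite, ite_mul, Finset.sum_ite_eq,
    Finset.sum_ite_eq', ite_and, eq_comm]

lemma curvForm_pair {n : ℕ} (R : Fin n → Fin n → Fin n → Fin n → ℂ) (p q r s : Fin n)
    (x y : ℂ) :
    curvForm R (Matrix.single p q x + Matrix.single r s y)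
      (Matrix.single p q x + Matrix.single r s y) =
    (R q p q p * x * x + R q p s r * x * y + R s r q p * y * x + R s r s r * y * y).re := by
  unfold curvForm
  congr 1
  simp only [Matrix.add_apply, mul_add, add_mul, Finset.sum_add_distrib]
  rw [sum4_stdBasis, sum4_stdBasis, sum4_stdBasis, sum4_stdBasis]
  ring

lemma conjTranspose_stdBasis {n : ℕ} (p q : Fin n) (x : ℂ) :
    (Matrix.single p q x).conjTranspose = Matrix.single q p (starRingEnd ℂ x) := by
  ext a b
  simp only [Matrix.conjTranspose_apply, Matrix.single, Matrix.of_apply,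
    apply_ite (starRingEnd ℂ), map_zero]
  by_cases h1 : p = b ∧ q = a
  · obtain ⟨rfl, rfl⟩ := h1; simp
  · rw [if_neg h1, if_neg (by tauto), star_zero]

lemma memH0_pair {n : ℕ} (p q : Fin n) (hpq : p ≠ q) (x : ℂ) :
    MemH0 (Matrix.single p q x + Matrix.single q p (starRingEnd ℂ x)) := by
  constructor
  · show _ = _
    rw [Matrix.conjTranspose_add, conjTranspose_stdBasis, conjTranspose_stdBasis,
      Complex.conj_conj, add_comm]
  · show Matrix.trace _ = 0
    rw [Matrix.trace_add, Matrix.trace_single_eq_of_ne _ _ _ (Ne.symm hpq),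
      Matrix.trace_single_eq_of_ne _ _ _ hpq, add_zero]

lemma memH0_diag {n : ℕ} (i j : Fin n) (hij : i ≠ j) :
    MemH0 (Matrix.single i i (1 : ℂ) + Matrix.single j j (-1 : ℂ)) := by
  constructor
  · show _ = _
    rw [Matrix.conjTranspose_add, conjTranspose_stdBasis, conjTranspose_stdBasis]
    simp only [map_one, map_neg]
  · show Matrix.trace _ = 0
    rw [Matrix.trace_add, Matrix.trace_single_eq_same, Matrix.trace_single_eq_same]
    ring

/-- Proposition 3.3, second assertion: if the traceless bisectional curvature operator is
nonnegative, then for `i ≠ j` one has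
`Re R(i,i,i,i) + Re R(j,j,j,j) ≥ 2·Re R(i,i,j,j) ≥ 0`. -/
theorem holSec_sum_ge_two_orth_of_nonnegTBC (n : ℕ) (hn : 2 ≤ n)
    (R : Fin n → Fin n → Fin n → Fin n → ℂ)
    (hR : IsKahlerCurvTensor R) (hpos : NonnegTBC R) :
    ∀ i j : Fin n, i ≠ j →
      2 * (R i i j j).re ≤ (R i i i i).re + (R j j j j).re ∧ 0 ≤ 2 * (R i i j j).re := by
  obtain ⟨hs1, hs2, hs3⟩ := hR
  intro i j hij
  -- symmetry facts
  have h1 : R j j i i = R i i j j := by rw [hs1 j j i i, hs2 i j j i]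
  have h3 : R j i i j = R i i j j := hs1 j i i j
  have h2 : starRingEnd ℂ (R i i j j) = R i i j j := hs3 i i j j
  have h4 : R i j j i = R i i j j := by rw [← hs3 j i i j, h3, h2]
  have h5 : R i j i j = starRingEnd ℂ (R j i j i) := (hs3 j i j i).symm
  -- first matrix: E_ii - E_jj
  have A := hpos _ (memH0_diag i j hij)
  rw [curvForm_pair] at A
  -- second matrix: E_ij + E_ji
  have B := hpos _ (memH0_pair i j hij 1)
  rw [map_one, curvForm_pair] at B
  -- third matrix: I·E_ij - I·E_ji
  have C := hpos _ (memH0_pair i j hij Complex.I)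
  rw [Complex.conj_I, curvForm_pair] at C
  rw [h1] at A
  rw [h3, h4, h5] at B
  rw [h3, h4, h5] at C
  simp only [mul_one, mul_neg, one_mul, neg_neg, neg_mul, Complex.add_re, Complex.sub_re,
    Complex.neg_re, Complex.conj_re, Complex.mul_re, Complex.mul_im, Complex.I_re, Complex.I_im,
    Complex.conj_im] at A B C
  constructor <;> nlinarith [A, B, C]
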